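/- Let q ≥ 4 and b ≥ 2 be integers, and let Φ_m denote the m-th cyclotomic polynomial. Then all prime factors of Φ_{q−1}(b), counted with multiplicity, are ≥ q, with at most one exception; that is, either every prime p dividing Φ_{q−1}(b) satisfies p ≥ q, or there is exactly one prime p < q dividing Φ_{q−1}(b), p² does not divide Φ_{q−1}(b), and every other prime divisor of Φ_{q−1}(b) is ≥ q. -/
import Mathlib


open Polynomial Finset

lemma myaux_root {p n b : ℕ} [Fact p.Prime]
    (h : (p:ℤ) ∣ (cyclotomic n ℤ).eval (b:ℤ)) :
    (cyclotomic n (ZMod p)).IsRoot ((b:ℤ) : ZMod p) := by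
  rw [IsRoot.def, ← map_cyclotomic_int n (ZMod p), eval_intCast_map]
  rw [← ZMod.intCast_zmod_eq_zero_iff_dvd] at h
  simpa using h

lemma myaux_ord {p m : ℕ} [hp : Fact p.Prime] {μ : ZMod p} (hm : 0 < m)
    (h : IsPrimitiveRoot μ m) : m ∣ p - 1 := by
  have hb0 : μ ≠ 0 := by
    intro h0
    have h1 := h.pow_eq_one
    rw [h0, zero_pow hm.ne'] at h1
    exact zero_ne_one h1
  have h2 := ZMod.pow_card_sub_one_eq_one hb0
  rw [h.eq_orderOf]
  exact orderOf_dvd_of_pow_eq_one h2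

lemma myaux_not_dvd {p n b : ℕ} (hp : p.Prime) (hn : 0 < n) (hpn : ¬ p ∣ n)
    (h : (p:ℤ) ∣ (cyclotomic n ℤ).eval (b:ℤ)) : n ∣ p - 1 := by
  haveI : Fact p.Prime := ⟨hp⟩
  haveI : NeZero ((n : ℕ) : ZMod p) := ⟨by
    rw [Ne, ZMod.natCast_eq_zero_iff]; exact hpn⟩
  have hroot := myaux_root h
  rw [isRoot_cyclotomic_iff] at hroot
  exact myaux_ord hn hroot

lemma myaux_dvd {p n b : ℕ} (hp : p.Prime) (hn : 0 < n) (hpn : p ∣ n)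
    (h : (p:ℤ) ∣ (cyclotomic n ℤ).eval (b:ℤ)) :
    IsPrimitiveRoot ((b:ℤ) : ZMod p) ((n / p ^ n.factorization p)) ∧ (n / p ^ n.factorization p) ∣ p - 1 := by
  haveI : Fact p.Prime := ⟨hp⟩
  have hm : ¬ p ∣ (n / p ^ n.factorization p) := Nat.not_dvd_ordCompl hp hn.ne'
  haveI : NeZero (((n / p ^ n.factorization p) : ℕ) : ZMod p) := ⟨by
    rw [Ne, ZMod.natCast_eq_zero_iff]; exact hm⟩
  have hroot := myaux_root h
  have hfact : n = p ^ (n.factorization p) * (n / p ^ n.factorization p) :=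
    (Nat.ordProj_mul_ordCompl_eq_self n p).symm
  rw [hfact, isRoot_cyclotomic_prime_pow_mul_iff_of_charP] at hroot
  exact ⟨hroot, myaux_ord (Nat.ordCompl_pos p hn.ne') hroot⟩


/-- Let `q ≥ 4` and `b ≥ 2` be integers.  All prime factors of `Φ_{q−1}(b)`,
counted with multiplicity, are `≥ q` with at most one exception: either every
prime divisor of `Φ_{q−1}(b)` is `≥ q`, or there is exactly one prime `p < q`
dividing `Φ_{q−1}(b)`, its square does not divide `Φ_{q−1}(b)`, and every other
prime divisor is `≥ q`. -/
theorem cyclotomic_eval_prime_factors_ge (q b : ℕ) (hq : 4 ≤ q) (hb : 2 ≤ b) :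
    (∀ p : ℕ, p.Prime → (p : ℤ) ∣ (Polynomial.cyclotomic (q - 1) ℤ).eval (b : ℤ) → q ≤ p) ∨
      (∃ p : ℕ, p.Prime ∧ p < q ∧ (p : ℤ) ∣ (Polynomial.cyclotomic (q - 1) ℤ).eval (b : ℤ) ∧
        ¬ (p : ℤ) ^ 2 ∣ (Polynomial.cyclotomic (q - 1) ℤ).eval (b : ℤ) ∧
        ∀ r : ℕ, r.Prime → (r : ℤ) ∣ (Polynomial.cyclotomic (q - 1) ℤ).eval (b : ℤ) →
          r ≠ p → q ≤ r) := by
  set n := q - 1 with hn_def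
  have hn3 : 3 ≤ n := by omega
  have hn0 : 0 < n := by omega
  set E := (cyclotomic n ℤ).eval (b:ℤ) with hE
  have key1 : ∀ p : ℕ, p.Prime → (p:ℤ) ∣ E → ¬ p ∣ n → q ≤ p := by
    intro p hp hpE hpn
    have h1 := myaux_not_dvd hp hn0 hpn hpE
    have h2 : n ≤ p - 1 := Nat.le_of_dvd (by have := hp.two_le; omega) h1
    have := hp.two_le
    omega
  by_cases hex : ∃ p : ℕ, p.Prime ∧ p < q ∧ (p:ℤ) ∣ E
  swap
  · left
    intro p hp hpE
    by_contra hc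
    exact hex ⟨p, hp, by omega, hpE⟩
  obtain ⟨p, hp, hplt, hpE⟩ := hex
  right
  have hp2 := hp.two_le
  have hpn : p ∣ n := by
    by_contra hc
    exact absurd (key1 p hp hpE hc) (by omega)
  obtain ⟨hprim, hmdvd⟩ := myaux_dvd hp hn0 hpn hpE
  rw [Int.cast_natCast] at hprim
  set m := n / p ^ n.factorization p with hm_def
  have hk1 : 1 ≤ n.factorization p := hp.factorization_pos_of_dvd hn0.ne' hpn
  have hfact : n = p ^ (n.factorization p) * m := (Nat.ordProj_mul_ordCompl_eq_self n p).symm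
  -- uniqueness of the small prime
  have huniq : ∀ r : ℕ, r.Prime → (r:ℤ) ∣ E → r ≠ p → q ≤ r := by
    intro r hr hrE hrp
    by_contra hc
    push_neg at hc
    have hrn : r ∣ n := by
      by_contra h'
      exact absurd (key1 r hr hrE h') (by omega)
    obtain ⟨hprim_r, hmr⟩ := myaux_dvd hr hn0 hrn hrE
    have hfact_r : n = r ^ (n.factorization r) * (n / r ^ n.factorization r) :=
      (Nat.ordProj_mul_ordCompl_eq_self n r).symm
    have hcop : p.Coprime (r ^ n.factorization r) :=
      ((Nat.coprime_primes hp hr).mpr (Ne.symm hrp)).pow_right _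
    have hpmr : p ∣ n / r ^ n.factorization r := by
      have h0 := hpn
      rw [hfact_r] at h0
      exact hcop.dvd_of_dvd_mul_left h0
    have hplt_r : p < r := by
      have h1 : p ≤ n / r ^ n.factorization r :=
        Nat.le_of_dvd (Nat.ordCompl_pos r hn0.ne') hpmr
      have h2 : n / r ^ n.factorization r ≤ r - 1 :=
        Nat.le_of_dvd (by have := hr.two_le; omega) hmr
      have := hr.two_le; omega
    have hcop' : r.Coprime (p ^ n.factorization p) :=
      ((Nat.coprime_primes hr hp).mpr hrp).pow_right _
    have hrm : r ∣ m := by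
      have h0 := hrn
      rw [hfact] at h0
      exact hcop'.dvd_of_dvd_mul_left h0
    have hrlt_p : r < p := by
      have h1 : r ≤ m := Nat.le_of_dvd (Nat.ordCompl_pos p hn0.ne') hrm
      have h2 : m ≤ p - 1 := Nat.le_of_dvd (by omega) hmdvd
      omega
    omega
  -- now the square-free part
  set d := n / p with hd_def
  have hdn : d ∣ n := Nat.div_dvd_of_dvd hpn
  have hd1 : 1 ≤ d := Nat.div_pos (Nat.le_of_dvd hn0 hpn) (by omega)
  have hdlt : d < n := Nat.div_lt_self hn0 (by omega)
  have hdprop : d ∈ n.properDivisors := Nat.mem_properDivisors.mpr ⟨hdn, hdlt⟩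
  have hdvd1 : ((b:ℤ)^d - 1) * E ∣ (b:ℤ)^n - 1 := by
    have h0 := X_pow_sub_one_mul_cyclotomic_dvd_X_pow_sub_one_of_dvd ℤ hdprop
    have h2 := Polynomial.eval_dvd (x := (b:ℤ)) h0
    simpa using h2
  set S : ℤ := ∑ i ∈ range p, ((b:ℤ)^d)^i with hS_def
  have hgeom : (b:ℤ)^n - 1 = ((b:ℤ)^d - 1) * S := by
    rw [hS_def, mul_comm, geom_sum_mul, ← pow_mul, Nat.div_mul_cancel hpn]
  have hbd0 : (b:ℤ)^d - 1 ≠ 0 := by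
    have h1 : (1:ℤ) < (b:ℤ) := by exact_mod_cast (by omega : 1 < b)
    have := one_lt_pow₀ h1 (by omega : d ≠ 0)
    omega
  have hES : E ∣ S := by
    rw [hgeom] at hdvd1
    exact (mul_dvd_mul_iff_left hbd0).mp hdvd1
  -- p divides b^d - 1
  have hmd : m ∣ d := by
    rw [hd_def, Nat.dvd_div_iff_mul_dvd hpn]
    obtain ⟨j, hj⟩ : ∃ j, n.factorization p = j + 1 := ⟨n.factorization p - 1, by omega⟩
    exact ⟨p ^ j, by rw [hfact, hj]; ring⟩
  have hbd_one : ((b : ZMod p))^d = 1 := by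
    obtain ⟨c, hc⟩ := hmd
    rw [hc, pow_mul, hprim.pow_eq_one, one_pow]
  have hpbd : (p:ℤ) ∣ (b:ℤ)^d - 1 := by
    rw [← ZMod.intCast_zmod_eq_zero_iff_dvd]
    push_cast
    rw [hbd_one]
    ring
  have hp2S : ¬ (p:ℤ)^2 ∣ S := by
    rcases hp.eq_two_or_odd' with hp2' | hodd
    · -- p = 2
      subst hp2'
      have hm1 : m = 1 := Nat.dvd_one.mp (by simpa using hmdvd)
      have hn2k : n = 2 ^ n.factorization 2 := by
        conv_lhs => rw [hfact, hm1, mul_one]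
      have hk2 : 2 ≤ n.factorization 2 := by
        rcases (by omega : 2 ≤ n.factorization 2 ∨ n.factorization 2 = 0 ∨
            n.factorization 2 = 1) with h | h | h
        · exact h
        · rw [h] at hn2k; simp at hn2k; omega
        · rw [h] at hn2k; simp at hn2k; omega
      have hdeven : 2 ∣ d := by
        rw [hd_def, Nat.dvd_div_iff_mul_dvd hpn]
        obtain ⟨j, hj⟩ : ∃ j, n.factorization 2 = j + 2 := ⟨n.factorization 2 - 2, by omega⟩
        exact ⟨2 ^ j, by rw [hn2k, hj]; ring⟩
      have hSeq : S = 1 + (b:ℤ)^d := by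
        rw [hS_def]; simp [Finset.sum_range_succ]
      have hbodd : Odd (b:ℤ) := by
        rcases Int.even_or_odd (b:ℤ) with he | ho
        · exfalso
          have h2S : (2:ℤ) ∣ S := dvd_trans (by exact_mod_cast hpE) hES
          have heven : Even ((b:ℤ)^d) := he.pow_of_ne_zero (by omega)
          rw [hSeq] at h2S
          obtain ⟨u, hu⟩ := heven
          omega
        · exact ho
      have hcodd : Odd ((b:ℤ)^(d/2)) := hbodd.pow
      have hx4 : (4:ℤ) ∣ (b:ℤ)^d - 1 := by
        obtain ⟨u, hu⟩ := hcodd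
        have hdd : d = d/2 * 2 := (Nat.div_mul_cancel hdeven).symm
        rw [hdd, pow_mul, hu]
        exact ⟨u*u + u, by ring⟩
      intro h4S
      have h4 : ((2:ℕ):ℤ)^2 = 4 := by norm_num
      rw [h4] at h4S
      have h5 := dvd_sub h4S hx4
      rw [hSeq] at h5
      have h6 : (1:ℤ) + (b:ℤ)^d - ((b:ℤ)^d - 1) = 2 := by ring
      rw [h6] at h5
      norm_num at h5
    · -- p odd
      obtain ⟨t, ht⟩ := hpbd
      have hxt : (b:ℤ)^d = 1 + p*t := by omega
      have hbin : ∀ i : ℕ, (p:ℤ)^2 ∣ (1+(p:ℤ)*t)^i - (1 + i*((p:ℤ)*t)) := by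
        intro i
        induction i with
        | zero => simp
        | succ i ih =>
          have heq : (1+(p:ℤ)*t)^(i+1) - (1 + ((i:ℕ)+1 : ℕ)*((p:ℤ)*t))
              = ((1+(p:ℤ)*t)^i - (1 + i*((p:ℤ)*t)))*(1+(p:ℤ)*t) + (i:ℤ)*t^2*(p:ℤ)^2 := by
            push_cast
            ring
          rw [heq]
          exact dvd_add (ih.mul_right _) ⟨(i:ℤ)*t^2, by ring⟩
      have hsum : (p:ℤ)^2 ∣ S - (p + (∑ i ∈ range p, (i:ℤ))*((p:ℤ)*t)) := by
        have h1 : S - ((p:ℤ) + (∑ i ∈ range p, (i:ℤ))*((p:ℤ)*t))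
            = ∑ i ∈ range p, ((1+(p:ℤ)*t)^i - (1 + i*((p:ℤ)*t))) := by
          rw [hS_def, hxt, Finset.sum_sub_distrib, Finset.sum_add_distrib,
            Finset.sum_const, card_range, ← Finset.sum_mul]
          push_cast
          ring
        rw [h1]
        exact Finset.dvd_sum fun i _ => hbin i
      have hpsum : (p:ℤ) ∣ ∑ i ∈ range p, (i:ℤ) := by
        have h2 : (∑ i ∈ range p, i) * 2 = p * (p-1) := Finset.sum_range_id_mul_two p
        have hpd : p ∣ (∑ i ∈ range p, i) * 2 := ⟨p - 1, h2⟩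
        have h3 := (Nat.Coprime.dvd_of_dvd_mul_right hodd.coprime_two_right hpd)
        have h4 : ((∑ i ∈ range p, i : ℕ) : ℤ) = ∑ i ∈ range p, (i:ℤ) := by push_cast; rfl
        rw [← h4]
        exact_mod_cast h3
      have hsum2 : (p:ℤ)^2 ∣ (∑ i ∈ range p, (i:ℤ))*((p:ℤ)*t) := by
        obtain ⟨c, hc⟩ := hpsum
        exact ⟨c*t, by rw [hc]; ring⟩
      intro hc
      have hfin : (p:ℤ)^2 ∣ (p:ℤ) := by
        have h3 := dvd_sub (dvd_sub hc hsum) hsum2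
        have h4 : S - (S - ((p:ℤ) + (∑ i ∈ range p, (i:ℤ))*((p:ℤ)*t)))
            - (∑ i ∈ range p, (i:ℤ))*((p:ℤ)*t) = (p:ℤ) := by ring
        rwa [h4] at h3
      have h5 : (p:ℤ) ∣ 1 := by
        have hp0 : (p:ℤ) ≠ 0 := by positivity
        have h6 : (p:ℤ)*(p:ℤ) ∣ (p:ℤ)*1 := by rw [mul_one]; rwa [← sq]
        exact (mul_dvd_mul_iff_left hp0).mp h6
      have := Int.le_of_dvd one_pos h5
      omega
  exact ⟨p, hp, hplt, hpE, fun hc => hp2S (hc.trans hES), huniq⟩
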